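/- Let G be an S_t-saturated graph on n vertices with exactly m vertices of degree less than t-1, and suppose G contains no copy of K_{r+1}, where r ≥ 2. Then (r-1)n²/(2r) ≥ (1/2)(n-m)(t-1) + binom(m,2). -/

import Mathlib

open SimpleGraph Finset

/-- Degree of a vertex, via `Set.ncard` (avoids decidability assumptions). -/
noncomputable def ndeg {V : Type*} (G : SimpleGraph V) (v : V) : ℕ :=
  (G.neighborSet v).ncard

/-- A graph contains a copy of the star `S_t` (with `t` edges) iff some vertex
has degree at least `t`. -/
def ContainsStar {V : Type*} (G : SimpleGraph V) (t : ℕ) : Prop :=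
  ∃ v, t ≤ ndeg G v

/-- `G` is `S_t`-saturated: it contains no copy of `S_t`, but adding any missing
edge creates one. -/
def StarSaturated {V : Type*} (G : SimpleGraph V) (t : ℕ) : Prop :=
  ¬ ContainsStar G t ∧
    ∀ u v : V, u ≠ v → ¬ G.Adj u v → ContainsStar (G ⊔ SimpleGraph.edge u v) t

private lemma two_mul_choose_two (m : ℕ) : 2 * m.choose 2 = m * (m - 1) := by
  induction m with
  | zero => rfl
  | succ k ih =>
    rw [Nat.choose_succ_succ, Nat.mul_add, ih, Nat.choose_one_right, Nat.succ_sub_one]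
    cases k with
    | zero => rfl
    | succ j => simp only [Nat.succ_sub_one]; ring

private lemma turan_edge_bound (n r : ℕ) (hr : 0 < r) :
    (r : ℝ) * (2 * #(turanGraph n r).edgeFinset) ≤ ((r : ℝ) - 1) * (n : ℝ) ^ 2 := by
  classical
  set c : ℕ → ℕ := fun k => #(Finset.univ.filter fun j : Fin n => (j : ℕ) % r = k) with hc
  have hdeg : ∀ i : Fin n, (turanGraph n r).degree i + c ((i : ℕ) % r) = n := by
    intro i
    have h1 : (turanGraph n r).degree i
        = #(Finset.univ.filter fun j : Fin n => ¬ ((j : ℕ) % r = (i : ℕ) % r)) := by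
      rw [degree, neighborFinset_eq_filter]
      congr 1
      ext j
      rw [Finset.mem_filter, Finset.mem_filter]
      simp only [Finset.mem_filter, turanGraph]
      simp [eq_comm]
    rw [h1]
    have h2 := Finset.card_filter_add_card_filter_not
      (s := (Finset.univ : Finset (Fin n)))
      (p := fun j : Fin n => (j : ℕ) % r = (i : ℕ) % r)
    simp only [Finset.card_univ, Fintype.card_fin] at h2
    show #(Finset.univ.filter fun j : Fin n => ¬ ((j : ℕ) % r = (i : ℕ) % r))
      + #(Finset.univ.filter fun j : Fin n => (j : ℕ) % r = (i : ℕ) % r) = n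
    omega
  have hfib : ∀ i ∈ (Finset.univ : Finset (Fin n)), (i : ℕ) % r ∈ Finset.range r := fun i _ =>
    Finset.mem_range.2 (Nat.mod_lt _ hr)
  have hsum2 : ∑ i : Fin n, c ((i : ℕ) % r) = ∑ k ∈ Finset.range r, (c k) ^ 2 := by
    rw [← Finset.sum_fiberwise_of_maps_to hfib (fun i : Fin n => c ((i : ℕ) % r))]
    refine Finset.sum_congr rfl fun k _ => ?_
    rw [Finset.sum_congr rfl (fun i hi => by
      rw [(Finset.mem_filter.1 hi).2]), Finset.sum_const]
    have h5 : #(Finset.univ.filter fun i : Fin n => (i : ℕ) % r = k) = c k := rfl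
    rw [h5, smul_eq_mul, sq]
  have hcard : ∑ k ∈ Finset.range r, c k = n := by
    rw [hc, ← Finset.card_eq_sum_card_fiberwise hfib, Finset.card_univ, Fintype.card_fin]
  have hkey : 2 * #(turanGraph n r).edgeFinset + ∑ k ∈ Finset.range r, (c k) ^ 2 = n * n := by
    rw [← sum_degrees_eq_twice_card_edges, ← hsum2, ← Finset.sum_add_distrib]
    rw [Finset.sum_congr rfl fun i _ => hdeg i]
    simp [Finset.card_univ]
  -- move to ℝ
  have hCS : ((n : ℝ)) ^ 2 ≤ (r : ℝ) * ∑ k ∈ Finset.range r, ((c k : ℝ)) ^ 2 := by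
    have h2 := sq_sum_le_card_mul_sum_sq (s := Finset.range r) (f := fun k => ((c k : ℝ)))
    have h3 : ∑ k ∈ Finset.range r, ((c k : ℝ)) = n := by exact_mod_cast congrArg (Nat.cast (R := ℝ)) hcard
    simpa [h3] using h2
  have hkeyR : 2 * (#(turanGraph n r).edgeFinset : ℝ) + ∑ k ∈ Finset.range r, ((c k : ℝ)) ^ 2
      = (n : ℝ) * n := by
    have h4 := congrArg (Nat.cast (R := ℝ)) hkey
    push_cast at h4
    linarith
  nlinarith [hCS, hkeyR]

theorem stmt11 {V : Type*} [Fintype V] (G : SimpleGraph V) (t r n m : ℕ)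
    (hr : 2 ≤ r)
    (hsat : StarSaturated G t) (hfree : G.CliqueFree (r + 1))
    (hn : n = Fintype.card V) (hm : m = {v : V | ndeg G v < t - 1}.ncard) :
    (1 / 2) * ((n : ℝ) - m) * ((t : ℝ) - 1) + (Nat.choose m 2 : ℝ) ≤
      ((r : ℝ) - 1) * (n : ℝ) ^ 2 / (2 * r) := by
  classical
  subst hn
  have hr0 : 0 < r := by omega
  have hr1 : (1 : ℝ) ≤ (r : ℝ) := by exact_mod_cast Nat.one_le_of_lt hr
  rcases Nat.eq_zero_or_pos t with ht0 | ht
  · have hV : IsEmpty V := by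
      by_contra h
      rw [not_isEmpty_iff] at h
      exact hsat.1 ⟨h.some, by omega⟩
    have hn0 : Fintype.card V = 0 := by rw [Fintype.card_eq_zero]
    have hm0 : m = 0 := by
      rw [hm]
      subst ht0
      simp
    rw [hn0, hm0, ht0]
    norm_num
  -- main case : t ≥ 1
  haveI : DecidableRel G.Adj := Classical.decRel _
  have hnd : ∀ v, ndeg G v = G.degree v := fun v => by
    rw [ndeg, degree, neighborFinset_def, Set.ncard_eq_toFinset_card']
  set L : Set V := {v : V | ndeg G v < t - 1} with hL
  have hdegle : ∀ v, ndeg G v < t := fun v => by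
    by_contra h
    exact hsat.1 ⟨v, by omega⟩
  have hclique : ∀ u ∈ L, ∀ v ∈ L, u ≠ v → G.Adj u v := by
    intro u hu v hv huv
    by_contra hadj
    obtain ⟨w, hw⟩ := hsat.2 u v huv hadj
    by_cases hwu : w = u
    · subst hwu
      have hsub : (G ⊔ SimpleGraph.edge w v).neighborSet w ⊆ insert v (G.neighborSet w) := by
        intro x hx
        rcases (SimpleGraph.sup_adj _ _ _ _).1 hx with h | h
        · exact Set.mem_insert_of_mem _ h
        · rcases (SimpleGraph.edge_adj w v w x).1 h with ⟨⟨_, h2⟩ | ⟨h1, h2⟩, _⟩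
          · exact h2 ▸ Set.mem_insert _ _
          · exact (h2.trans h1) ▸ Set.mem_insert _ _
      have h3 : ndeg (G ⊔ SimpleGraph.edge w v) w ≤ ndeg G w + 1 :=
        le_trans (Set.ncard_le_ncard hsub (Set.toFinite _)) (Set.ncard_insert_le _ _)
      have h4 : ndeg G w < t - 1 := hu
      omega
    · by_cases hwv : w = v
      · subst hwv
        have hsub : (G ⊔ SimpleGraph.edge u w).neighborSet w ⊆ insert u (G.neighborSet w) := by
          intro x hx
          rcases (SimpleGraph.sup_adj _ _ _ _).1 hx with h | h
          · exact Set.mem_insert_of_mem _ h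
          · rcases (SimpleGraph.edge_adj u w w x).1 h with ⟨⟨h1, _⟩ | ⟨_, h2⟩, _⟩
            · exact absurd h1 hwu
            · exact h2 ▸ Set.mem_insert _ _
        have h3 : ndeg (G ⊔ SimpleGraph.edge u w) w ≤ ndeg G w + 1 :=
          le_trans (Set.ncard_le_ncard hsub (Set.toFinite _)) (Set.ncard_insert_le _ _)
        have h4 : ndeg G w < t - 1 := hv
        omega
      · have hsub : (G ⊔ SimpleGraph.edge u v).neighborSet w ⊆ G.neighborSet w := by
          intro x hx
          rcases (SimpleGraph.sup_adj _ _ _ _).1 hx with h | h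
          · exact h
          · rcases (SimpleGraph.edge_adj u v w x).1 h with ⟨⟨h1, _⟩ | ⟨h1, _⟩, _⟩
            · exact absurd h1 hwu
            · exact absurd h1 hwv
        have h3 : ndeg (G ⊔ SimpleGraph.edge u v) w ≤ ndeg G w :=
          Set.ncard_le_ncard hsub (Set.toFinite _)
        have h4 := hdegle w
        omega
  -- cardinality facts
  have hmn : m ≤ Fintype.card V := by
    rw [hm]
    refine le_trans (Set.ncard_le_ncard (Set.subset_univ L) (Set.toFinite _)) ?_
    rw [Set.ncard_univ, Nat.card_eq_fintype_card]
  set Lf : Finset V := (Set.toFinite L).toFinset with hLf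
  have hmLf : m = Lf.card := by rw [hm, Set.ncard_eq_toFinset_card L (Set.toFinite L)]
  have hlow : ∀ v ∈ Lf, m - 1 ≤ ndeg G v := by
    intro v hv
    rw [Set.Finite.mem_toFinset] at hv
    have hsub : L \ {v} ⊆ G.neighborSet v := by
      intro x hx
      exact (SimpleGraph.mem_neighborSet _ _ _).2
        (hclique v hv x hx.1 (fun h => hx.2 (by simp [h.symm])))
    have h5 : (L \ {v}).ncard = m - 1 := by
      rw [Set.ncard_diff_singleton_of_mem hv, ← hm]
    calc m - 1 = (L \ {v}).ncard := h5.symm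
      _ ≤ ndeg G v := Set.ncard_le_ncard hsub (Set.toFinite _)
  have hhigh : ∀ v ∈ Lfᶜ, t - 1 ≤ ndeg G v := by
    intro v hv
    rw [Finset.mem_compl, Set.Finite.mem_toFinset] at hv
    have : ¬ ndeg G v < t - 1 := hv
    omega
  -- sum of degrees lower bound
  have hsumA : (Fintype.card V - m) * (t - 1) + m * (m - 1) ≤ 2 * #G.edgeFinset := by
    rw [← sum_degrees_eq_twice_card_edges, ← Finset.sum_add_sum_compl Lf (G.degree ·)]
    have hA : m * (m - 1) ≤ ∑ v ∈ Lf, G.degree v := by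
      have := Finset.card_nsmul_le_sum Lf (G.degree ·) (m - 1)
        (fun v hv => by simpa [← hnd v] using hlow v hv)
      rwa [smul_eq_mul, ← hmLf] at this
    have hB : (Fintype.card V - m) * (t - 1) ≤ ∑ v ∈ Lfᶜ, G.degree v := by
      have := Finset.card_nsmul_le_sum Lfᶜ (G.degree ·) (t - 1)
        (fun v hv => by simpa [← hnd v] using hhigh v hv)
      rwa [smul_eq_mul, Finset.card_compl, ← hmLf] at this
    omega
  -- Turán upper bound
  obtain ⟨H, instH, hH⟩ := SimpleGraph.exists_isTuranMaximal (V := V) hr0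
  have hGH : #G.edgeFinset ≤ #H.edgeFinset := hH.2 hfree
  obtain ⟨f⟩ := hH.nonempty_iso_turanGraph
  have hHT : #H.edgeFinset = #(turanGraph (Fintype.card V) r).edgeFinset :=
    f.card_edgeFinset_eq
  have hTB := turan_edge_bound (Fintype.card V) r hr0
  have castB : (r : ℝ) * (2 * #G.edgeFinset) ≤ ((r : ℝ) - 1) * (Fintype.card V : ℝ) ^ 2 := by
    refine le_trans ?_ hTB
    have : (#G.edgeFinset : ℝ) ≤ (#(turanGraph (Fintype.card V) r).edgeFinset : ℝ) := by
      exact_mod_cast hGH.trans hHT.le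
    nlinarith [hr1]
  rw [← two_mul_choose_two] at hsumA
  have castA : ((Fintype.card V : ℝ) - m) * ((t : ℝ) - 1) + 2 * (m.choose 2 : ℝ)
      ≤ 2 * (#G.edgeFinset : ℝ) := by
    have := (Nat.cast_le (α := ℝ)).2 hsumA
    push_cast [Nat.cast_sub hmn, Nat.cast_sub ht] at this
    linarith
  rw [le_div_iff₀ (by positivity : (0:ℝ) < 2 * r)]
  nlinarith [mul_le_mul_of_nonneg_left castA (by positivity : (0:ℝ) ≤ (r:ℝ)), castB]
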